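/- Let σ : ℝ → ℝ be infinitely differentiable with σ(t + 1) = σ(t) + 1 and σ'(t) > 0 for all t. Let γ be a piecewise-smooth bounded loop whose derivative is bounded away from 0, i.e. there is M > 0 with |γ'(t)| ≥ M for all t at which γ' is defined. Then γ ∘ σ is a piecewise-smooth bounded loop whose derivative is bounded away from 0, and for every t ∈ ℝ: t is a sign-change point of (γ∘σ)' if and only if σ(t) is a sign-change point of γ'. -/

import Mathlib

/-- The set `F + ℤ = {f + k : f ∈ F, k ∈ ℤ}` of integer translates of points of `F`. -/
def BreaksSet (F : Set ℝ) : Set ℝ := {x : ℝ | ∃ f ∈ F, ∃ k : ℤ, x = f + k}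

/-- `γ` is a loop (1-periodic), continuous, and infinitely differentiable off `F + ℤ`;
i.e. a piecewise-smooth loop with breaks in `F + ℤ`. -/
def HasBreaksIn (γ : ℝ → ℝ) (F : Set ℝ) : Prop :=
  (∀ t, γ (t + 1) = γ t) ∧ Continuous γ ∧ ContDiffOn ℝ (⊤ : ℕ∞) γ (BreaksSet F)ᶜ

/-- `γ` is a piecewise-smooth loop. -/
def IsPiecewiseSmooth (γ : ℝ → ℝ) : Prop :=
  ∃ F : Set ℝ, F.Finite ∧ F ⊆ Set.Ico 0 1 ∧ HasBreaksIn γ F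

/-- A piecewise-smooth loop with breaks in `F + ℤ`, all of whose derivatives are
bounded on the complement of the breaks. -/
def BoundedBreaksIn (γ : ℝ → ℝ) (F : Set ℝ) : Prop :=
  HasBreaksIn γ F ∧ ∀ k : ℕ, ∃ M : ℝ, ∀ t ∈ (BreaksSet F)ᶜ, |iteratedDeriv k γ t| ≤ M

/-- `γ` is a piecewise-smooth bounded loop. -/
def IsPiecewiseSmoothBounded (γ : ℝ → ℝ) : Prop :=
  ∃ F : Set ℝ, F.Finite ∧ F ⊆ Set.Ico 0 1 ∧ BoundedBreaksIn γ F

/-- The right limit of `f` at `t`, with the variable ranging outside the set `B`. -/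
def RightLimAt (f : ℝ → ℝ) (B : Set ℝ) (t L : ℝ) : Prop :=
  Filter.Tendsto f (nhdsWithin t (Set.Ioi t \ B)) (nhds L)

/-- The left limit of `f` at `t`, with the variable ranging outside the set `B`. -/
def LeftLimAt (f : ℝ → ℝ) (B : Set ℝ) (t L : ℝ) : Prop :=
  Filter.Tendsto f (nhdsWithin t (Set.Iio t \ B)) (nhds L)

/-- `t` is a sign-change point of `f` (relative to the break set `B`): the one-sided
limits of `f` at `t` exist and have opposite nonzero signs. -/
def SignChangeAt (f : ℝ → ℝ) (B : Set ℝ) (t : ℝ) : Prop :=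
  ∃ Lp Lm : ℝ, RightLimAt f B t Lp ∧ LeftLimAt f B t Lm ∧ Lp * Lm < 0

/-- The 1-periodic step function equal to `1` on `[0, 1/2) + ℤ` and `-1` on `[1/2, 1) + ℤ`. -/
noncomputable def stepLoop : ℝ → ℝ := fun t => if Int.fract t < 1/2 then 1 else -1

open Set Filter Topology

lemma breaks_closed (F : Set ℝ) (hF : F.Finite) : IsClosed (BreaksSet F) := by
  have h : BreaksSet F = ⋃ f ∈ F, (fun y : ℝ => f + y) '' (Set.range (Int.cast : ℤ → ℝ)) := by
    ext x
    simp only [BreaksSet, mem_setOf_eq, mem_iUnion, mem_image, mem_range, exists_prop]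
    constructor
    · rintro ⟨f, hf, k, rfl⟩; exact ⟨f, hf, (k:ℝ), ⟨k, rfl⟩, rfl⟩
    · rintro ⟨f, hf, y, ⟨k, rfl⟩, rfl⟩; exact ⟨f, hf, k, rfl⟩
  rw [h]
  exact hF.isClosed_biUnion fun f _ =>
    (Homeomorph.addLeft f).isClosedMap _ Int.isClosedEmbedding_coe_real.isClosed_range

lemma periodic_deriv' {f : ℝ → ℝ} (hp : Function.Periodic f 1) :
    Function.Periodic (deriv f) 1 := by
  intro t
  have h1 : deriv (fun s => f (s + 1)) t = deriv f (t + 1) := deriv_comp_add_const f 1 t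
  have h2 : (fun s => f (s + 1)) = f := funext fun s => hp s
  rw [← h1, h2]

lemma periodic_iteratedDeriv {f : ℝ → ℝ} (hp : Function.Periodic f 1) (n : ℕ) :
    Function.Periodic (iteratedDeriv n f) 1 := by
  induction n generalizing f with
  | zero => simpa [iteratedDeriv_zero] using hp
  | succ n ih => rw [iteratedDeriv_succ']; exact ih (periodic_deriv' hp)

lemma bound_of_periodic_continuous {f : ℝ → ℝ} (hc : Continuous f)
    (hp : Function.Periodic f 1) : ∃ C, ∀ t, |f t| ≤ C := by
  obtain ⟨x0, _, hx0⟩ := isCompact_Icc.exists_isMaxOn (⟨0, by norm_num⟩ : (Icc (0:ℝ) 1).Nonempty)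
    (continuous_abs.comp hc).continuousOn
  refine ⟨|f x0|, fun t => ?_⟩
  have h1 : f (Int.fract t) = f t := by
    have h := hp.sub_int_mul_eq (x := t) ⌊t⌋
    rw [mul_one] at h
    rw [Int.fract, h]
  have h2 : Int.fract t ∈ Icc (0:ℝ) 1 :=
    ⟨Int.fract_nonneg t, (Int.fract_lt_one t).le⟩
  calc |f t| = |f (Int.fract t)| := by rw [h1]
    _ ≤ |f x0| := hx0 h2

lemma lowerbound_of_periodic_continuous {f : ℝ → ℝ} (hc : Continuous f)
    (hp : Function.Periodic f 1) (hpos : ∀ t, 0 < f t) : ∃ m, 0 < m ∧ ∀ t, m ≤ f t := by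
  obtain ⟨x0, _, hx0⟩ := isCompact_Icc.exists_isMinOn (⟨0, by norm_num⟩ : (Icc (0:ℝ) 1).Nonempty)
    hc.continuousOn
  refine ⟨f x0, hpos x0, fun t => ?_⟩
  have h1 : f (Int.fract t) = f t := by
    have h := hp.sub_int_mul_eq (x := t) ⌊t⌋
    rw [mul_one] at h
    rw [Int.fract, h]
  rw [← h1]
  exact hx0 ⟨Int.fract_nonneg t, (Int.fract_lt_one t).le⟩

section sigma
variable {σ : ℝ → ℝ}

lemma sigma_deriv_periodic (hσper : ∀ t, σ (t + 1) = σ t + 1) :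
    Function.Periodic (deriv σ) 1 := by
  intro t
  have h1 : deriv (fun s => σ (s + 1)) t = deriv σ (t + 1) := deriv_comp_add_const σ 1 t
  have h2 : (fun s => σ (s + 1)) = (fun s => σ s + 1) := funext fun s => hσper s
  rw [← h1, h2, deriv_add_const]

lemma sigma_int (hσper : ∀ t, σ (t + 1) = σ t + 1) (n : ℤ) (t : ℝ) :
    σ (t + n) = σ t + n := by
  induction n using Int.induction_on with
  | zero => simp
  | succ n ih =>
      have h : (t + ((n:ℤ)+1 : ℤ)) = (t + (n:ℤ)) + 1 := by push_cast; ring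
      rw [h, hσper, ih]; push_cast; ring
  | pred n ih =>
      have h : (t + (-(n:ℤ)-1 : ℤ)) + 1 = t + (-(n:ℤ) : ℤ) := by push_cast; ring
      have h2 := hσper (t + (-(n:ℤ)-1 : ℤ))
      rw [h, ih] at h2
      push_cast at h2 ⊢
      linarith

lemma sigma_surj (hσ : Continuous σ) (hσper : ∀ t, σ (t + 1) = σ t + 1) :
    Function.Surjective σ := by
  intro y
  obtain ⟨n, hn⟩ := exists_int_gt (y - σ 0)
  obtain ⟨m, hm⟩ := exists_int_lt (y - σ 0)
  have h1 : σ ((0:ℝ) + m) ≤ y := by rw [sigma_int hσper]; linarith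
  have h2 : y ≤ σ ((0:ℝ) + n) := by rw [sigma_int hσper]; linarith
  have hmn : (0:ℝ) + m ≤ 0 + n := by
    have : (m:ℝ) ≤ n := by linarith
    linarith
  obtain ⟨x, _, hx⟩ := intermediate_value_Icc hmn hσ.continuousOn ⟨h1, h2⟩
  exact ⟨x, hx⟩

lemma sigma_map_nhdsWithin (hσc : Continuous σ) (hσper : ∀ t, σ (t + 1) = σ t + 1)
    (hmono : StrictMono σ) (s : Set ℝ) (t : ℝ) :
    Filter.map σ (𝓝[s] t) = 𝓝[σ '' s] (σ t) := by
  let e : ℝ ≃o ℝ := StrictMono.orderIsoOfSurjective σ hmono (sigma_surj hσc hσper)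
  exact e.toHomeomorph.isEmbedding.map_nhdsWithin_eq s t

lemma sigma_image_Ioi (hmono : StrictMono σ) (hsurj : Function.Surjective σ) (t : ℝ) :
    σ '' Ioi t = Ioi (σ t) := by
  ext y
  constructor
  · rintro ⟨x, hx, rfl⟩; exact hmono hx
  · intro hy
    obtain ⟨x, rfl⟩ := hsurj y
    exact ⟨x, hmono.lt_iff_lt.mp hy, rfl⟩

lemma sigma_image_Iio (hmono : StrictMono σ) (hsurj : Function.Surjective σ) (t : ℝ) :
    σ '' Iio t = Iio (σ t) := by
  ext y
  constructor
  · rintro ⟨x, hx, rfl⟩; exact hmono hx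
  · intro hy
    obtain ⟨x, rfl⟩ := hsurj y
    exact ⟨x, hmono.lt_iff_lt.mp hy, rfl⟩

end sigma

/-- Precomposition with (a lift of) an orientation-preserving
diffeomorphism `σ` of the circle sends a piecewise-smooth bounded loop whose derivative
is bounded away from `0` to another such loop, and `t` is a sign-change point of
`(γ∘σ)'` iff `σ t` is a sign-change point of `γ'`. -/
theorem stmt12 (σ : ℝ → ℝ) (hσ : ContDiff ℝ (⊤ : ℕ∞) σ)
    (hσper : ∀ t, σ (t + 1) = σ t + 1) (hσpos : ∀ t, 0 < deriv σ t)
    (γ : ℝ → ℝ) (F : Set ℝ) (hFfin : F.Finite) (hFsub : F ⊆ Set.Ico 0 1)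
    (hγ : BoundedBreaksIn γ F)
    (M : ℝ) (hM : 0 < M) (hbdd : ∀ t ∈ (BreaksSet F)ᶜ, M ≤ |deriv γ t|) :
    ((∀ t, (γ ∘ σ) (t + 1) = (γ ∘ σ) t) ∧ Continuous (γ ∘ σ) ∧
      ContDiffOn ℝ (⊤ : ℕ∞) (γ ∘ σ) (σ ⁻¹' BreaksSet F)ᶜ ∧
      (∀ k : ℕ, ∃ M' : ℝ, ∀ t ∈ (σ ⁻¹' BreaksSet F)ᶜ, |iteratedDeriv k (γ ∘ σ) t| ≤ M') ∧
      (∃ M' : ℝ, 0 < M' ∧ ∀ t ∈ (σ ⁻¹' BreaksSet F)ᶜ, M' ≤ |deriv (γ ∘ σ) t|)) ∧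
    (∀ t : ℝ, SignChangeAt (deriv (γ ∘ σ)) (σ ⁻¹' BreaksSet F) t ↔
      SignChangeAt (deriv γ) (BreaksSet F) (σ t)) := by
  obtain ⟨⟨hγper, hγcont, hγcd⟩, hγbd⟩ := hγ
  set B := BreaksSet F with hBdef
  have hBclosed := breaks_closed F hFfin
  have hUopen : IsOpen Bᶜ := hBclosed.isOpen_compl
  have hσc := hσ.continuous
  have hVopen : IsOpen (σ ⁻¹' B)ᶜ := by
    rw [← preimage_compl]; exact hUopen.preimage hσc
  have hmono : StrictMono σ := strictMono_of_deriv_pos hσpos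
  have hsurj := sigma_surj hσc hσper
  have hmapsTo : MapsTo σ (σ ⁻¹' B)ᶜ Bᶜ := fun x hx => hx
  have hone : (1 : WithTop ℕ∞) ≤ ((⊤ : ℕ∞) : WithTop ℕ∞) := by exact_mod_cast le_top
  have hdc : Continuous (deriv σ) := hσ.continuous_deriv hone
  have hσdiff : Differentiable ℝ σ := hσ.differentiable (by simp)
  -- chain rule on the good set
  have hderiv : ∀ s ∈ (σ ⁻¹' B)ᶜ, deriv (γ ∘ σ) s = deriv γ (σ s) * deriv σ s := by
    intro s hs
    have hγd : DifferentiableAt ℝ γ (σ s) :=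
      (hγcd.contDiffAt (hUopen.mem_nhds hs)).differentiableAt (by simp)
    exact deriv_comp s hγd (hσdiff s)
  -- positive lower bound on deriv σ
  obtain ⟨m, hm0, hmle⟩ := lowerbound_of_periodic_continuous hdc
    (sigma_deriv_periodic hσper) hσpos
  -- Part 4: iterated derivative bounds
  have hbounds : ∀ k : ℕ, ∃ M' : ℝ, ∀ t ∈ (σ ⁻¹' B)ᶜ, |iteratedDeriv k (γ ∘ σ) t| ≤ M' := by
    intro k
    choose Ms hMs using hγbd
    obtain ⟨C, hC⟩ : ∃ C, ∀ i ≤ k, Ms i ≤ C := by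
      refine ⟨(Finset.range (k+1)).sup' (by simp) Ms, fun i hi => Finset.le_sup' Ms ?_⟩
      simpa using Nat.lt_succ_of_le hi
    have hσsm : ContDiff ℝ (⊤:ℕ∞) (deriv σ) := (contDiff_infty_iff_deriv.mp hσ).2
    have hb : ∀ i : ℕ, ∃ b, ∀ t, |iteratedDeriv (i+1) σ t| ≤ b := by
      intro i
      have hc : Continuous (iteratedDeriv i (deriv σ)) :=
        hσsm.continuous_iteratedDeriv i (by exact_mod_cast le_top)
      have hp : Function.Periodic (iteratedDeriv i (deriv σ)) 1 :=
        periodic_iteratedDeriv (sigma_deriv_periodic hσper) i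
      obtain ⟨b, hbb⟩ := bound_of_periodic_continuous hc hp
      exact ⟨b, fun t => by rw [iteratedDeriv_succ']; exact hbb t⟩
    choose bs hbs using hb
    set S : ℝ := (Finset.range k).sum (fun i => |bs i|) with hSdef
    have hS0 : 0 ≤ S := Finset.sum_nonneg fun i _ => abs_nonneg _
    set D : ℝ := 1 + S with hDdef
    have hD1 : (1:ℝ) ≤ D := by simp [hDdef]; linarith
    have hDi : ∀ i, 1 ≤ i → i ≤ k → ∀ t : ℝ, |iteratedDeriv i σ t| ≤ D := by
      intro i h1 h2 t
      obtain ⟨j, rfl⟩ : ∃ j, i = j + 1 := ⟨i - 1, (Nat.succ_pred_eq_of_pos h1).symm⟩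
      calc |iteratedDeriv (j+1) σ t| ≤ bs j := hbs j t
        _ ≤ |bs j| := le_abs_self _
        _ ≤ S := Finset.single_le_sum (fun i _ => abs_nonneg (bs i))
            (Finset.mem_range.mpr (by omega))
        _ ≤ D := by linarith
    refine ⟨((Nat.factorial k : ℕ) : ℝ) * C * D ^ k, fun x hx => ?_⟩
    have key := norm_iteratedFDerivWithin_comp_le (𝕜 := ℝ) hγcd hσ.contDiffOn
      (by exact_mod_cast le_top : (k : WithTop ℕ∞) ≤ ((⊤ : ℕ∞) : WithTop ℕ∞))
      hUopen.uniqueDiffOn hVopen.uniqueDiffOn hmapsTo hx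
      (C := C) (D := D) ?_ ?_
    · rw [← Real.norm_eq_abs, ← norm_iteratedFDeriv_eq_norm_iteratedDeriv,
        ← iteratedFDerivWithin_of_isOpen k hVopen hx]
      exact key
    · intro i hi
      rw [iteratedFDerivWithin_of_isOpen i hUopen (hmapsTo hx),
        norm_iteratedFDeriv_eq_norm_iteratedDeriv, Real.norm_eq_abs]
      exact le_trans (hMs i (σ x) (hmapsTo hx)) (hC i hi)
    · intro i h1 h2
      rw [iteratedFDerivWithin_of_isOpen i hVopen hx,
        norm_iteratedFDeriv_eq_norm_iteratedDeriv, Real.norm_eq_abs]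
      calc |iteratedDeriv i σ x| ≤ D := hDi i h1 h2 x
        _ ≤ D ^ i := le_self_pow₀ hD1 (by omega)
  -- key one-sided-limit transfer lemmas
  have hmap := sigma_map_nhdsWithin hσc hσper hmono
  have hdtend : ∀ (s : Set ℝ) (t : ℝ), Tendsto (deriv σ) (𝓝[s] t) (𝓝 (deriv σ t)) :=
    fun s t => (hdc.tendsto t).mono_left nhdsWithin_le_nhds
  have heq : ∀ (sS : Set ℝ) (t : ℝ), sS ⊆ (σ ⁻¹' B)ᶜ →
      (fun s => deriv γ (σ s) * deriv σ s) =ᶠ[𝓝[sS] t] (deriv (γ ∘ σ)) := by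
    intro sS t hsub
    filter_upwards [self_mem_nhdsWithin] with s hs
    exact (hderiv s (hsub hs)).symm
  have key_a : ∀ (sS : Set ℝ) (t : ℝ), sS ⊆ (σ ⁻¹' B)ᶜ → ∀ L : ℝ,
      Tendsto (deriv γ) (𝓝[σ '' sS] (σ t)) (𝓝 L) →
      Tendsto (deriv (γ ∘ σ)) (𝓝[sS] t) (𝓝 (L * deriv σ t)) := by
    intro sS t hsub L hL
    rw [← hmap sS t, tendsto_map'_iff] at hL
    exact (hL.mul (hdtend sS t)).congr' (heq sS t hsub)
  have key_b : ∀ (sS : Set ℝ) (t : ℝ), sS ⊆ (σ ⁻¹' B)ᶜ → ∀ L : ℝ,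
      Tendsto (deriv (γ ∘ σ)) (𝓝[sS] t) (𝓝 L) →
      Tendsto (deriv γ) (𝓝[σ '' sS] (σ t)) (𝓝 (L / deriv σ t)) := by
    intro sS t hsub L hL
    rw [← hmap sS t, tendsto_map'_iff]
    have hdiv : Tendsto (fun s => deriv (γ ∘ σ) s / deriv σ s) (𝓝[sS] t)
        (𝓝 (L / deriv σ t)) := hL.div (hdtend sS t) (ne_of_gt (hσpos t))
    refine hdiv.congr' ?_
    filter_upwards [self_mem_nhdsWithin] with s hs
    rw [hderiv s (hsub hs)]
    field_simp [ne_of_gt (hσpos s)]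
    rfl
  have himp : ∀ t : ℝ, σ '' (Ioi t \ σ ⁻¹' B) = Ioi (σ t) \ B := by
    intro t
    rw [image_diff hmono.injective, image_preimage_eq _ hsurj, sigma_image_Ioi hmono hsurj]
  have himm : ∀ t : ℝ, σ '' (Iio t \ σ ⁻¹' B) = Iio (σ t) \ B := by
    intro t
    rw [image_diff hmono.injective, image_preimage_eq _ hsurj, sigma_image_Iio hmono hsurj]
  have hsubp : ∀ t : ℝ, Ioi t \ σ ⁻¹' B ⊆ (σ ⁻¹' B)ᶜ := fun t x hx => hx.2
  have hsubm : ∀ t : ℝ, Iio t \ σ ⁻¹' B ⊆ (σ ⁻¹' B)ᶜ := fun t x hx => hx.2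
  refine ⟨⟨?_, hγcont.comp hσc, hγcd.comp hσ.contDiffOn hmapsTo, hbounds,
      ⟨M * m, mul_pos hM hm0, ?_⟩⟩, ?_⟩
  · intro t
    simp only [Function.comp_apply, hσper, hγper]
  · intro t ht
    rw [hderiv t ht, abs_mul]
    have h1 : M ≤ |deriv γ (σ t)| := hbdd _ (hmapsTo ht)
    have h2 : m ≤ |deriv σ t| := le_trans (hmle t) (le_abs_self _)
    exact mul_le_mul h1 h2 hm0.le (le_trans hM.le h1)
  · intro t
    constructor
    · rintro ⟨Lp, Lm, hp, hm, hs⟩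
      refine ⟨Lp / deriv σ t, Lm / deriv σ t, ?_, ?_, ?_⟩
      · have := key_b _ t (hsubp t) Lp hp
        rwa [himp t] at this
      · have := key_b _ t (hsubm t) Lm hm
        rwa [himm t] at this
      · have : Lp / deriv σ t * (Lm / deriv σ t) = Lp * Lm / (deriv σ t * deriv σ t) := by
          ring
        rw [this]
        exact div_neg_of_neg_of_pos hs (mul_pos (hσpos t) (hσpos t))
    · rintro ⟨Lp, Lm, hp, hm, hs⟩
      refine ⟨Lp * deriv σ t, Lm * deriv σ t, ?_, ?_, ?_⟩
      · exact key_a _ t (hsubp t) Lp (by rwa [himp t])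
      · exact key_a _ t (hsubm t) Lm (by rwa [himm t])
      · have : Lp * deriv σ t * (Lm * deriv σ t) = Lp * Lm * (deriv σ t * deriv σ t) := by
          ring
        rw [this]
        exact mul_neg_of_neg_of_pos hs (mul_pos (hσpos t) (hσpos t))
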